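/- Every oriented graph whose missing edges form a matching contains a vertex v with |N⁺(v)| ≤ |N⁺⁺(v)|. -/

import Mathlib

variable {V : Type*}

/-- An oriented graph: no loops or 2-cycles (asymmetric relation). -/
def Oriented (E : V → V → Prop) : Prop := ∀ u v : V, E u v → ¬ E v u

/-- A tournament: oriented and any two distinct vertices are joined by an arc. -/
def Tournament (E : V → V → Prop) : Prop :=
  Oriented E ∧ ∀ u v : V, u ≠ v → E u v ∨ E v u

def outN (E : V → V → Prop) (v : V) : Set V := {u | E v u}

def inN (E : V → V → Prop) (v : V) : Set V := {u | E u v}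

/-- The second out-neighborhood: vertices at directed distance exactly 2. -/
def secondN (E : V → V → Prop) (v : V) : Set V :=
  {u | ¬ E v u ∧ u ≠ v ∧ ∃ w, E v w ∧ E w u}

/-- `u` and `v` are distinct non-adjacent vertices (a missing edge). -/
def NonAdj (E : V → V → Prop) (u v : V) : Prop := u ≠ v ∧ ¬ E u v ∧ ¬ E v u

/-- The missing edges form a matching: every vertex has at most one non-neighbor. -/
def MissingMatching (E : V → V → Prop) : Prop :=
  ∀ u v w : V, NonAdj E u v → NonAdj E u w → v = w

/-- A special arc `x ↠ y`: an arc such that `x` is not in the second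
out-neighborhood of `y`. -/
def SpecialArc (E : V → V → Prop) (x y : V) : Prop :=
  E x y ∧ ¬ ∃ u, E y u ∧ E u x

/-- Number of forward arcs of an ordering (list) of the vertices. -/
noncomputable def fwd (E : V → V → Prop) (L : List V) : ℕ :=
  Set.ncard {p : ℕ × ℕ | p.1 < p.2 ∧ ∃ (h1 : p.1 < L.length) (h2 : p.2 < L.length),
    E (L.get ⟨p.1, h1⟩) (L.get ⟨p.2, h2⟩)}

/-- A median order: an enumeration of all vertices maximizing the number of
forward arcs. -/
def MedianOrder (E : V → V → Prop) (L : List V) : Prop :=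
  L.Nodup ∧ (∀ v : V, v ∈ L) ∧
    ∀ M : List V, M.Nodup → (∀ v : V, v ∈ M) → fwd E M ≤ fwd E L

/-- A module: any two vertices inside have the same in- and out-neighborhoods
outside. -/
def IsModule (E : V → V → Prop) (I : Set V) : Prop :=
  ∀ u ∈ I, ∀ v ∈ I, ∀ w, w ∉ I → (E u w ↔ E v w) ∧ (E w u ↔ E w v)

/-- 2-degeneracy of the underlying undirected graph. -/
def TwoDegenerate (E : V → V → Prop) : Prop :=
  ∀ S : Set V, S.Nonempty → ∃ v ∈ S, Set.ncard {u | u ∈ S ∧ u ≠ v ∧ (E u v ∨ E v u)} ≤ 2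

/-- The relation `(a,b) R (c,d)`: the 4-cycle `a → c ↠ b → d ↠ a`. -/
def Rrel (E : V → V → Prop) (a b c d : V) : Prop :=
  E a c ∧ SpecialArc E c b ∧ E b d ∧ SpecialArc E d a


attribute [local instance 10] Classical.propDecidable

noncomputable def cnt {V : Type*} (p : V → Prop) : List V → ℕ
  | [] => 0
  | x :: l => (if p x then 1 else 0) + cnt p l

section cntAPI
variable {V : Type*} {p q : V → Prop} {l l₁ l₂ : List V} {x : V}

@[simp] lemma cnt_nil : cnt p ([] : List V) = 0 := rfl

lemma cnt_cons : cnt p (x :: l) = (if p x then 1 else 0) + cnt p l := rfl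

lemma cnt_cons_pos (hp : p x) : cnt p (x :: l) = 1 + cnt p l := by
  rw [cnt_cons, if_pos hp]

lemma cnt_cons_neg (hp : ¬ p x) : cnt p (x :: l) = cnt p l := by
  rw [cnt_cons, if_neg hp]; omega

lemma cnt_append (l₁ l₂ : List V) : cnt p (l₁ ++ l₂) = cnt p l₁ + cnt p l₂ := by
  induction l₁ with
  | nil => simp
  | cons a t ih => simp only [List.cons_append, cnt_cons, ih]; omega

lemma cnt_perm (h : List.Perm l₁ l₂) : cnt p l₁ = cnt p l₂ := by
  induction h with
  | nil => rfl
  | cons a _ ih => simp only [cnt_cons, ih]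
  | swap a b t => simp only [cnt_cons]; omega
  | trans _ _ ih1 ih2 => rw [ih1, ih2]

lemma cnt_mono (h : ∀ a ∈ l, p a → q a) : cnt p l ≤ cnt q l := by
  induction l with
  | nil => simp
  | cons a t ih =>
    have ht : cnt p t ≤ cnt q t := ih (fun a ha => h a (List.mem_cons_of_mem _ ha))
    by_cases hp : p a
    · rw [cnt_cons_pos hp, cnt_cons_pos (h a List.mem_cons_self hp)]; omega
    · rw [cnt_cons_neg hp, cnt_cons]; omega

lemma cnt_congr (h : ∀ a ∈ l, p a ↔ q a) : cnt p l = cnt q l :=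
  le_antisymm (cnt_mono fun a ha => (h a ha).1) (cnt_mono fun a ha => (h a ha).2)

/-- disjoint lower bound -/
lemma cnt_add_le (r : V → Prop) (hpq : ∀ a ∈ l, p a → r a) (hq : ∀ a ∈ l, q a → r a)
    (hd : ∀ a ∈ l, p a → q a → False) : cnt p l + cnt q l ≤ cnt r l := by
  induction l with
  | nil => simp
  | cons a t ih =>
    have ht := ih (fun a ha => hpq a (List.mem_cons_of_mem _ ha))
      (fun a ha => hq a (List.mem_cons_of_mem _ ha))
      (fun a ha => hd a (List.mem_cons_of_mem _ ha))
    have hm : a ∈ a :: t := List.mem_cons_self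
    by_cases hp : p a
    · rw [cnt_cons_pos hp, cnt_cons_neg (fun h => hd a hm hp h), cnt_cons_pos (hpq a hm hp)]
      omega
    · rw [cnt_cons_neg hp]
      by_cases hqa : q a
      · rw [cnt_cons_pos hqa, cnt_cons_pos (hq a hm hqa)]; omega
      · rw [cnt_cons_neg hqa, cnt_cons]; omega

lemma cnt_split (q : V → Prop) (l : List V) :
    cnt p l = cnt (fun a => p a ∧ q a) l + cnt (fun a => p a ∧ ¬ q a) l := by
  induction l with
  | nil => simp
  | cons a t ih =>
    simp only [cnt_cons, ih]
    by_cases hp : p a <;> by_cases hq : q a <;> simp [hp, hq] <;> omega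

lemma cnt_pos (h : 0 < cnt p l) : ∃ a ∈ l, p a := by
  induction l with
  | nil => simp at h
  | cons a t ih =>
    by_cases hp : p a
    · exact ⟨a, List.mem_cons_self, hp⟩
    · rw [cnt_cons_neg hp] at h
      obtain ⟨b, hb, hpb⟩ := ih h
      exact ⟨b, List.mem_cons_of_mem _ hb, hpb⟩

lemma cnt_eq_zero (h : ∀ a ∈ l, ¬ p a) : cnt p l = 0 := by
  induction l with
  | nil => rfl
  | cons a t ih =>
    rw [cnt_cons_neg (h a List.mem_cons_self)]
    exact ih (fun a ha => h a (List.mem_cons_of_mem _ ha))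

lemma cnt_le_one (hl : l.Nodup) (h : ∀ a ∈ l, ∀ b ∈ l, p a → p b → a = b) : cnt p l ≤ 1 := by
  induction l with
  | nil => simp
  | cons a t ih =>
    have hnd := (List.nodup_cons.1 hl)
    by_cases hp : p a
    · rw [cnt_cons_pos hp, cnt_eq_zero]
      intro b hb hpb
      have hba : b = a := h b (List.mem_cons_of_mem _ hb) a List.mem_cons_self hpb hp
      exact hnd.1 (hba ▸ hb)
    · rw [cnt_cons_neg hp]
      exact ih hnd.2 (fun x hx y hy => h x (List.mem_cons_of_mem _ hx) y (List.mem_cons_of_mem _ hy))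

lemma cnt_first_split (h : ∃ a ∈ l, p a) :
    ∃ l₁ u l₂, l = l₁ ++ u :: l₂ ∧ p u ∧ ∀ y ∈ l₁, ¬ p y := by
  induction l with
  | nil => simp at h
  | cons a t ih =>
    by_cases hp : p a
    · exact ⟨[], a, t, rfl, hp, by simp⟩
    · obtain ⟨b, hb, hpb⟩ := h
      rcases List.mem_cons.1 hb with rfl | hbt
      · exact absurd hpb hp
      · obtain ⟨l₁, u, l₂, heq, hu, hfirst⟩ := ih ⟨b, hbt, hpb⟩
        refine ⟨a :: l₁, u, l₂, by rw [heq]; rfl, hu, ?_⟩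
        intro y hy
        rcases List.mem_cons.1 hy with rfl | hy'
        · exact hp
        · exact hfirst y hy'

lemma cnt_eq_ncard (hl : l.Nodup) : cnt p l = Set.ncard {y | y ∈ l ∧ p y} := by
  induction l with
  | nil => simp
  | cons a t ih =>
    have hnd := List.nodup_cons.1 hl
    have hfin : {y | y ∈ t ∧ p y}.Finite := t.finite_toSet.subset (fun y hy => hy.1)
    by_cases hp : p a
    · rw [cnt_cons_pos hp, ih hnd.2]
      have hset : {y | y ∈ a :: t ∧ p y} = insert a {y | y ∈ t ∧ p y} := by
        ext y
        simp only [Set.mem_setOf_eq, List.mem_cons, Set.mem_insert_iff]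
        constructor
        · rintro ⟨hy | hy, hpy⟩
          · exact Or.inl hy
          · exact Or.inr ⟨hy, hpy⟩
        · rintro (rfl | ⟨hy, hpy⟩)
          · exact ⟨Or.inl rfl, hp⟩
          · exact ⟨Or.inr hy, hpy⟩
      rw [hset, Set.ncard_insert_of_notMem (fun h => hnd.1 h.1) hfin]
      omega
    · rw [cnt_cons_neg hp, ih hnd.2]
      have hset : {y | y ∈ a :: t ∧ p y} = {y | y ∈ t ∧ p y} := by
        ext y
        simp only [Set.mem_setOf_eq, List.mem_cons]
        constructor
        · rintro ⟨hy | hy, hpy⟩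
          · exact absurd (hy ▸ hpy) hp
          · exact ⟨hy, hpy⟩
        · rintro ⟨hy, hpy⟩
          exact ⟨Or.inr hy, hpy⟩
      rw [hset]

end cntAPI

section med
variable {V : Type*} (E : V → V → Prop)

noncomputable def crossL : List V → List V → ℕ
  | [], _ => 0
  | x :: m, l => cnt (fun y => E x y) l + crossL m l

noncomputable def fwdL : List V → ℕ
  | [] => 0
  | x :: l => cnt (fun y => E x y) l + fwdL l

variable {E}

lemma crossL_nil_right (m : List V) : crossL E m [] = 0 := by
  induction m with
  | nil => rfl
  | cons a t ih => show cnt _ [] + crossL E t [] = 0; rw [ih]; rfl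

lemma crossL_cons_right (m : List V) (x : V) (l : List V) :
    crossL E m (x :: l) = cnt (fun a => E a x) m + crossL E m l := by
  induction m with
  | nil => rfl
  | cons a t ih =>
    show cnt (fun y => E a y) (x :: l) + crossL E t (x :: l)
      = cnt (fun b => E b x) (a :: t) + (cnt (fun y => E a y) l + crossL E t l)
    rw [ih]
    show (if E a x then 1 else 0) + cnt (fun y => E a y) l + _
      = (if E a x then 1 else 0) + cnt (fun b => E b x) t + _
    omega

lemma fwdL_append (m l : List V) : fwdL E (m ++ l) = fwdL E m + crossL E m l + fwdL E l := by
  induction m with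
  | nil => show fwdL E l = 0 + 0 + fwdL E l; omega
  | cons a t ih =>
    show cnt (fun y => E a y) (t ++ l) + fwdL E (t ++ l)
      = cnt (fun y => E a y) t + fwdL E t + (cnt (fun y => E a y) l + crossL E t l) + fwdL E l
    rw [cnt_append, ih]
    omega

/-- move-to-front identity -/
lemma fwdL_move_front (l₁ l₂ : List V) (u : V) :
    fwdL E (l₁ ++ u :: l₂) + cnt (fun y => E u y) l₁
      = fwdL E (u :: (l₁ ++ l₂)) + cnt (fun y => E y u) l₁ := by
  have h1 : fwdL E (l₁ ++ u :: l₂)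
      = fwdL E l₁ + (cnt (fun a => E a u) l₁ + crossL E l₁ l₂)
        + (cnt (fun y => E u y) l₂ + fwdL E l₂) := by
    rw [fwdL_append, crossL_cons_right]; rfl
  have h2 : fwdL E (u :: (l₁ ++ l₂))
      = (cnt (fun y => E u y) l₁ + cnt (fun y => E u y) l₂)
        + (fwdL E l₁ + crossL E l₁ l₂ + fwdL E l₂) := by
    show cnt (fun y => E u y) (l₁ ++ l₂) + fwdL E (l₁ ++ l₂) = _
    rw [cnt_append, fwdL_append]
  omega

def Med (E : V → V → Prop) (L : List V) : Prop := ∀ M, List.Perm M L → fwdL E M ≤ fwdL E L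

lemma exists_max_list {α : Type*} (g : α → ℕ) (l : List α) (hne : l ≠ []) :
    ∃ a ∈ l, ∀ b ∈ l, g b ≤ g a := by
  induction l with
  | nil => exact absurd rfl hne
  | cons a t ih =>
    rcases eq_or_ne t [] with rfl | hte
    · refine ⟨a, List.mem_cons_self, ?_⟩
      intro b hb
      rcases List.mem_cons.1 hb with rfl | h
      · exact le_refl _
      · simp at h
    · obtain ⟨m, hm, hmax⟩ := ih hte
      by_cases hle : g a ≤ g m
      · refine ⟨m, List.mem_cons_of_mem _ hm, ?_⟩
        intro b hb
        rcases List.mem_cons.1 hb with rfl | h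
        · exact hle
        · exact hmax b h
      · refine ⟨a, List.mem_cons_self, ?_⟩
        intro b hb
        rcases List.mem_cons.1 hb with rfl | h
        · exact le_refl _
        · exact le_trans (hmax b h) (le_of_not_ge hle)

lemma exists_max_fwd (L : List V) : ∃ M, List.Perm M L ∧ Med E M := by
  have hmem : L ∈ L.permutations := List.mem_permutations.2 (List.Perm.refl L)
  obtain ⟨M, hM, hmax⟩ := exists_max_list (fwdL E) L.permutations (List.ne_nil_of_mem hmem)
  have hperm : List.Perm M L := List.mem_permutations.1 hM
  exact ⟨M, hperm, fun N hN => hmax N (List.mem_permutations.2 (hN.trans hperm))⟩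

lemma Med.peel {x : V} {l : List V} (h : Med E (x :: l)) : Med E l := by
  intro M hM
  have h2 := h (x :: M) (hM.cons x)
  have e1 : fwdL E (x :: M) = cnt (fun y => E x y) M + fwdL E M := rfl
  have e2 : fwdL E (x :: l) = cnt (fun y => E x y) l + fwdL E l := rfl
  have e3 : cnt (fun y => E x y) M = cnt (fun y => E x y) l := cnt_perm hM
  omega

lemma Med.peel_append {m l : List V} (h : Med E (m ++ l)) : Med E l := by
  induction m with
  | nil => exact h
  | cons a t ih => exact ih (Med.peel (by exact h))

lemma Med.front_le {l₁ l₂ : List V} {u : V} (h : Med E (l₁ ++ u :: l₂)) :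
    cnt (fun y => E u y) l₁ ≤ cnt (fun y => E y u) l₁ := by
  have hp := h (u :: (l₁ ++ l₂)) List.perm_middle.symm
  have := fwdL_move_front (E := E) l₁ l₂ u
  omega

lemma Med.front_med {l₁ l₂ : List V} {u : V} (h : Med E (l₁ ++ u :: l₂))
    (heq : cnt (fun y => E u y) l₁ = cnt (fun y => E y u) l₁) :
    Med E (u :: (l₁ ++ l₂)) := by
  intro M hM
  have hfe : fwdL E (u :: (l₁ ++ l₂)) = fwdL E (l₁ ++ u :: l₂) := by
    have := fwdL_move_front (E := E) l₁ l₂ u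
    omega
  rw [hfe]
  exact h M (hM.trans List.perm_middle.symm)

end med

section key

variable {V : Type*} {E : V → V → Prop}

/-- second-neighborhood predicate relative to a witness list -/
def secp (E : V → V → Prop) (f : V) (l : List V) (v : V) : Prop :=
  ¬ E f v ∧ v ≠ f ∧ ∃ w ∈ l, E f w ∧ E w v

theorem key_med (hO : Oriented E) (hM : MissingMatching E) :
    ∀ (n : ℕ) (l : List V) (f : V), l.length ≤ n → (l ++ [f]).Nodup →
      Med E (l ++ [f]) →
      cnt (fun v => E f v) l ≤ cnt (secp E f l) l := by
  intro n
  induction n with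
  | zero =>
    intro l f hlen _ _
    have hl : l = [] := List.length_eq_zero_iff.1 (Nat.le_zero.1 hlen)
    subst hl; simp
  | succ n IH =>
    intro l f hlen hnd hmed
    by_contra hfail
    push_neg at hfail
    -- f ∉ l
    have hndl : l.Nodup := (List.nodup_append.1 hnd).1
    have hdisj : ∀ a ∈ l, a ∈ [f] → False :=
      fun a ha hb => (List.nodup_append.1 hnd).2.2 a ha a hb rfl
    have hfnl : f ∉ l := fun hf => hdisj f hf (List.mem_singleton.2 rfl)
    -- out-degree of f ≤ in-degree of f
    have hBle : cnt (fun v => E f v) l ≤ cnt (fun v => E v f) l :=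
      Med.front_le (l₁ := l) (l₂ := []) (u := f) hmed
    have hIn : cnt (fun v => E v f) l ≤ cnt (fun v => ¬ E f v) l :=
      cnt_mono (fun a _ h => hO a f h)
    have hsplit := cnt_split (p := fun v => ¬ E f v) (secp E f l) l
    have hss : cnt (fun v => ¬ E f v ∧ secp E f l v) l = cnt (secp E f l) l :=
      cnt_congr (fun a _ => ⟨fun h => h.2, fun h => ⟨h.1, h⟩⟩)
    have hWpos : 0 < cnt (fun v => ¬ E f v ∧ ¬ secp E f l v) l := by omega
    obtain ⟨l₁, u, l₂, hleq, hu, hfirst⟩ := cnt_first_split (cnt_pos hWpos)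
    subst hleq
    -- basic memberships
    have hul : u ∈ l₁ ++ u :: l₂ := List.mem_append_right _ List.mem_cons_self
    have hufl : u ≠ f := fun h => hfnl (h ▸ hul)
    have hunl₁ : u ∉ l₁ := by
      intro hu1
      have := (List.nodup_append.1 hndl).2.2
      exact this u hu1 u List.mem_cons_self rfl
    have hl₁mem : ∀ y ∈ l₁, y ∈ l₁ ++ u :: l₂ := fun y hy => List.mem_append_left _ hy
    have hl₂mem : ∀ y ∈ l₂, y ∈ l₁ ++ u :: l₂ :=
      fun y hy => List.mem_append_right _ (List.mem_cons_of_mem _ hy)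
    have hl₁BS : ∀ y ∈ l₁, E f y ∨ secp E f (l₁ ++ u :: l₂) y := by
      intro y hy
      by_contra hcon
      push_neg at hcon
      exact hfirst y hy ⟨hcon.1, hcon.2⟩
    -- suffix induction
    have hassoc : (l₁ ++ u :: l₂) ++ [f] = l₁ ++ u :: (l₂ ++ [f]) := by simp
    have hmed' : Med E (l₁ ++ u :: (l₂ ++ [f])) := hassoc ▸ hmed
    have hmed₂ : Med E (l₂ ++ [f]) := (Med.peel_append hmed').peel
    have hnd₂ : (l₂ ++ [f]).Nodup := by
      refine List.Sublist.nodup ?_ hnd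
      exact ((List.sublist_cons_self u l₂).trans
        (List.sublist_append_right l₁ (u :: l₂))).append_right [f]
    have hlen' : (l₁ ++ u :: l₂).length = l₁.length + 1 + l₂.length := by
      simp [List.length_append]; omega
    have hlen₂ : l₂.length ≤ n := by omega
    have hsuffix : cnt (fun v => E f v) l₂ ≤ cnt (secp E f (l₁ ++ u :: l₂)) l₂ := by
      refine le_trans (IH l₂ f hlen₂ hnd₂ hmed₂) (cnt_mono ?_)
      rintro a ha ⟨h1, h2, w, hw, h3, h4⟩
      exact ⟨h1, h2, w, hl₂mem w hw, h3, h4⟩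
    -- counting decompositions
    have cBl : cnt (fun v => E f v) (l₁ ++ u :: l₂)
        = cnt (fun v => E f v) l₁ + cnt (fun v => E f v) l₂ := by
      rw [cnt_append, cnt_cons_neg hu.1]
    have cSl : cnt (secp E f (l₁ ++ u :: l₂)) (l₁ ++ u :: l₂)
        = cnt (secp E f (l₁ ++ u :: l₂)) l₁ + cnt (secp E f (l₁ ++ u :: l₂)) l₂ := by
      rw [cnt_append, cnt_cons_neg hu.2]
    -- prefix deficit
    have hdef : cnt (secp E f (l₁ ++ u :: l₂)) l₁ + 1 ≤ cnt (fun v => E f v) l₁ := by omega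
    -- no out-neighbor of f dominates u
    have hBnotdom : ∀ y ∈ l₁ ++ u :: l₂, E f y → ¬ E y u := by
      intro y hy hfy hyu
      exact hu.2 ⟨hu.1, hufl, y, hy, hfy, hyu⟩
    -- in-degree of u within l₁ is within sec
    have hin_le : cnt (fun y => E y u) l₁
        ≤ cnt (fun y => secp E f (l₁ ++ u :: l₂) y ∧ E y u) l₁ := by
      refine cnt_mono ?_
      intro y hy hyu
      rcases hl₁BS y hy with hb | hs
      · exact absurd hyu (hBnotdom y (hl₁mem y hy) hb)
      · exact ⟨hs, hyu⟩
    -- out-degree of u within l₁ lower bound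
    have hout_ge : cnt (fun y => E f y ∧ E u y) l₁
          + cnt (fun y => secp E f (l₁ ++ u :: l₂) y ∧ E u y) l₁
        ≤ cnt (fun y => E u y) l₁ := by
      refine cnt_add_le _ (fun a _ h => h.2) (fun a _ h => h.2) ?_
      intro a _ h1 h2
      exact h2.1.1 h1.1
    have hβsplit := cnt_split (p := fun y => E f y) (fun y => E u y) l₁
    have hNA_le_one : cnt (fun y => E f y ∧ ¬ E u y) l₁ ≤ 1 := by
      refine cnt_le_one ((List.nodup_append.1 hndl).1) ?_
      intro a ha b hb hpa hpb
      have hnau : ∀ c ∈ l₁, E f c ∧ ¬ E u c → (u ≠ c ∧ ¬ E u c ∧ ¬ E c u) := by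
        intro c hc hpc
        exact ⟨fun h => hunl₁ (h ▸ hc), hpc.2, hBnotdom c (hl₁mem c hc) hpc.1⟩
      exact hM u a b (hnau a ha hpa) (hnau b hb hpb)
    have hs2 : cnt (fun y => secp E f (l₁ ++ u :: l₂) y ∧ E u y) l₁
          + cnt (fun y => secp E f (l₁ ++ u :: l₂) y ∧ E y u) l₁
        ≤ cnt (secp E f (l₁ ++ u :: l₂)) l₁ := by
      refine cnt_add_le _ (fun a _ h => h.1) (fun a _ h => h.1) ?_
      intro a _ h1 h2
      exact hO u a h1.2 h2.2
    -- medianness: out ≤ in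
    have hout_le_in : cnt (fun y => E u y) l₁ ≤ cnt (fun y => E y u) l₁ :=
      Med.front_le hmed'
    -- conclude equality
    have heq : cnt (fun y => E u y) l₁ = cnt (fun y => E y u) l₁ := by omega
    -- move u to front, stay median, peel
    have hmedfront : Med E (u :: (l₁ ++ (l₂ ++ [f]))) := Med.front_med hmed' heq
    have hmedp : Med E ((l₁ ++ l₂) ++ [f]) := by
      have h := Med.peel hmedfront
      have : l₁ ++ (l₂ ++ [f]) = (l₁ ++ l₂) ++ [f] := by simp
      exact this ▸ h
    have hndp : ((l₁ ++ l₂) ++ [f]).Nodup := by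
      refine List.Sublist.nodup ?_ hnd
      exact ((List.sublist_cons_self u l₂).append_left l₁).append_right [f]
    have hlenp : (l₁ ++ l₂).length ≤ n := by
      have : (l₁ ++ l₂).length = l₁.length + l₂.length := by simp
      omega
    have hfinal : cnt (fun v => E f v) (l₁ ++ l₂)
        ≤ cnt (secp E f (l₁ ++ u :: l₂)) (l₁ ++ l₂) := by
      refine le_trans (IH (l₁ ++ l₂) f hlenp hndp hmedp) (cnt_mono ?_)
      rintro a ha ⟨h1, h2, w, hw, h3, h4⟩
      rcases List.mem_append.1 hw with hw1 | hw2
      · exact ⟨h1, h2, w, hl₁mem w hw1, h3, h4⟩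
      · exact ⟨h1, h2, w, hl₂mem w hw2, h3, h4⟩
    have e1 : cnt (fun v => E f v) (l₁ ++ l₂)
        = cnt (fun v => E f v) l₁ + cnt (fun v => E f v) l₂ := cnt_append _ _
    have e2 : cnt (secp E f (l₁ ++ u :: l₂)) (l₁ ++ l₂)
        = cnt (secp E f (l₁ ++ u :: l₂)) l₁ + cnt (secp E f (l₁ ++ u :: l₂)) l₂ :=
      cnt_append _ _
    omega

end key

theorem stmt10 [Fintype V] [Nonempty V] (E : V → V → Prop)
    (hO : Oriented E) (hM : MissingMatching E) :
    ∃ v : V, Set.ncard (outN E v) ≤ Set.ncard (secondN E v) := by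
  classical
  obtain ⟨M, hperm, hmed⟩ := exists_max_fwd (E := E) (Finset.univ : Finset V).toList
  have hnodup : M.Nodup := (hperm.nodup_iff).2 (Finset.nodup_toList _)
  have hmemall : ∀ v : V, v ∈ M :=
    fun v => hperm.mem_iff.2 (Finset.mem_toList.2 (Finset.mem_univ v))
  have hMne : M ≠ [] := List.ne_nil_of_mem (hmemall (Classical.arbitrary V))
  obtain ⟨l, f, hMf⟩ : ∃ l f, M = l ++ [f] := by
    rcases M.eq_nil_or_concat with h | ⟨L, b, h⟩
    · exact absurd h hMne
    · exact ⟨L, b, by simpa using h⟩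
  subst hMf
  have hkey := key_med hO hM l.length l f le_rfl hnodup hmed
  have hndl : l.Nodup := (List.nodup_append.1 hnodup).1
  have hfnl : f ∉ l := fun hf =>
    (List.nodup_append.1 hnodup).2.2 f hf f (List.mem_singleton.2 rfl) rfl
  have hmem_l : ∀ v : V, v ≠ f → v ∈ l := by
    intro v hv
    rcases List.mem_append.1 (hmemall v) with h | h
    · exact h
    · exact absurd (List.mem_singleton.1 h) hv
  have hEff : ¬ E f f := fun h => hO f f h h
  have houtset : {y | y ∈ l ∧ E f y} = outN E f := by
    ext y
    simp only [Set.mem_setOf_eq, outN]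
    constructor
    · rintro ⟨_, h⟩; exact h
    · intro h
      exact ⟨hmem_l y (fun he => hEff (he ▸ h)), h⟩
  have hsecset : {y | y ∈ l ∧ secp E f l y} = secondN E f := by
    ext y
    simp only [Set.mem_setOf_eq, secondN, secp]
    constructor
    · rintro ⟨hyl, h1, h2, w, hw, h3, h4⟩
      exact ⟨h1, h2, w, h3, h4⟩
    · rintro ⟨h1, h2, w, h3, h4⟩
      exact ⟨hmem_l y h2, h1, h2, w, hmem_l w (fun he => hEff (he ▸ h3)), h3, h4⟩
  rw [cnt_eq_ncard hndl, cnt_eq_ncard hndl, houtset, hsecset] at hkey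
  exact ⟨f, hkey⟩
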